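/- Let n ∈ ℕ, let (a_{jk}) be an n×n complex Hermitian matrix (a_{jk} = conj(a_{kj})), let p ∈ (1, ∞), and let c_1, …, c_n ∈ ℂ. Choose λ_{kj} ∈ ℂ with |λ_{kj}| = 1 and a_{kj} = λ_{kj}|a_{kj}|. Then Σ_{j,k} (c_j·conj(F_p(c_j))·|a_{kj}| − c_j·conj(F_p(c_k))·a_{kj}) = (1/2)·Σ_{j,k} |a_{kj}|·(λ_{kj}c_j − c_k)·conj(F_p(λ_{kj}c_j) − F_p(c_k)), and this quantity lies in the sector Σ_p. -/

import Mathlib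

open Complex

lemma L1 (t x : ℝ) (ht0 : 0 ≤ t) (ht1 : t ≤ 1) (hx : 0 ≤ x) :
    Real.sinh (t * x) ≤ t * Real.sinh x := by
  have hmono : MonotoneOn (fun u : ℝ => t * Real.sinh u - Real.sinh (t * u)) (Set.Ici 0) := by
    apply monotoneOn_of_deriv_nonneg (convex_Ici 0)
    · fun_prop
    · fun_prop
    · intro u hu
      rw [interior_Ici] at hu
      have : deriv (fun u : ℝ => t * Real.sinh u - Real.sinh (t * u)) u
          = t * Real.cosh u - t * Real.cosh (t * u) := by
        have h1 : HasDerivAt (fun u : ℝ => t * Real.sinh u - Real.sinh (t * u))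
            (t * Real.cosh u - Real.cosh (t * u) * t) u := by
          exact ((Real.hasDerivAt_sinh u).const_mul t).sub
            (((Real.hasDerivAt_sinh (t*u)).comp u (by simpa using (hasDerivAt_id u).const_mul t)))
        rw [h1.deriv]; ring
      rw [this]
      have hc : Real.cosh (t * u) ≤ Real.cosh u := by
        rw [Real.cosh_le_cosh]
        rw [abs_mul]
        have hu' : 0 ≤ u := le_of_lt hu
        rw [_root_.abs_of_nonneg ht0, _root_.abs_of_nonneg hu']
        nlinarith [abs_nonneg u]
      nlinarith
  have h0 := hmono (Set.self_mem_Ici) (Set.mem_Ici.mpr hx) hx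
  simp at h0
  linarith

lemma L2 (a b v : ℝ) (hb : 0 ≤ b) (hba : b ≤ a) :
    a^2 * Real.cosh (b * v) ≤ b^2 * Real.cosh (a * v) + (a^2 - b^2) := by
  have ha : 0 ≤ a := le_trans hb hba
  -- reduce to v ≥ 0 via evenness
  have habs : ∀ u : ℝ, Real.cosh (u * v) = Real.cosh (u * |v|) := by
    intro u
    rcases abs_cases v with ⟨h, _⟩ | ⟨h, _⟩
    · rw [h]
    · rw [h, mul_neg, Real.cosh_neg]
  rw [habs a, habs b]
  set u := |v| with hu
  have hu0 : 0 ≤ u := abs_nonneg v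
  -- f(u) = b^2 cosh(a u) - a^2 cosh(b u) + (a^2 - b^2), f(0)=0, f' ≥ 0
  have hmono : MonotoneOn (fun u : ℝ => b^2 * Real.cosh (a*u) - a^2 * Real.cosh (b*u))
      (Set.Ici 0) := by
    apply monotoneOn_of_deriv_nonneg (convex_Ici 0)
    · fun_prop
    · fun_prop
    · intro w hw
      rw [interior_Ici] at hw
      have hd : HasDerivAt (fun u : ℝ => b^2 * Real.cosh (a*u) - a^2 * Real.cosh (b*u))
          (b^2 * (Real.sinh (a*w) * a) - a^2 * (Real.sinh (b*w) * b)) w := by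
        exact (((Real.hasDerivAt_cosh (a*w)).comp w
            (by simpa using (hasDerivAt_id w).const_mul a)).const_mul (b^2)).sub
          (((Real.hasDerivAt_cosh (b*w)).comp w
            (by simpa using (hasDerivAt_id w).const_mul b)).const_mul (a^2))
      rw [hd.deriv]
      rcases eq_or_lt_of_le ha with rfl | ha'
      · have hb0 : b = 0 := le_antisymm hba hb
        simp [hb0]
      · -- b * sinh(a w) ≥ a * sinh (b w), from L1 with t = b/a, x = a w
        have ht1 : b / a ≤ 1 := (div_le_one ha').mpr hba
        have ht0 : 0 ≤ b / a := div_nonneg hb ha'.le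
        have hx : 0 ≤ a * w := mul_nonneg ha'.le hw.le
        have h := L1 (b/a) (a*w) ht0 ht1 hx
        have hbw : b / a * (a * w) = b * w := by field_simp
        rw [hbw] at h
        have : a * Real.sinh (b*w) ≤ b * Real.sinh (a*w) := by
          have := mul_le_mul_of_nonneg_left h ha'.le
          calc a * Real.sinh (b*w) ≤ a * (b/a * Real.sinh (a*w)) := this
            _ = b * Real.sinh (a*w) := by field_simp
        nlinarith [mul_le_mul_of_nonneg_left this (mul_nonneg hb ha'.le)]
  have h0 := hmono Set.self_mem_Ici (Set.mem_Ici.mpr hu0) hu0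
  simp at h0
  linarith

lemma L4 (p x y : ℝ) (hp : 1 < p) :
    4*(p-1)*(Real.exp ((p-1)*x + y) - Real.exp (x + (p-1)*y))^2
      ≤ (p-2)^2 * ((Real.exp (2*x) - Real.exp (2*y))
          * (Real.exp ((2*p-2)*x) - Real.exp ((2*p-2)*y))) := by
  set d := x - y with hd
  have hba : |p - 2| ≤ p := by
    rcases abs_cases (p-2) with ⟨h, _⟩ | ⟨h, _⟩ <;> linarith
  have h2 := L2 p |p-2| d (abs_nonneg _) hba
  have hcosh : Real.cosh (|p-2| * d) = Real.cosh ((p-2) * d) := by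
    rcases abs_cases (p-2) with ⟨h, _⟩ | ⟨h, _⟩
    · rw [h]
    · rw [h, neg_mul, Real.cosh_neg]
  rw [hcosh, _root_.sq_abs] at h2
  rw [Real.cosh_eq, Real.cosh_eq] at h2
  -- h2 : p^2 * ((exp ((p-2)*d) + exp (-((p-2)*d)))/2) ≤ (p-2)^2 * ((exp (p*d) + exp (-(p*d)))/2) + (p^2 - (p-2)^2)
  have hE : (0:ℝ) < Real.exp (p*(x+y)) := Real.exp_pos _
  have e1 : Real.exp ((p-1)*x + y) * Real.exp ((p-1)*x + y)
      = Real.exp (p*(x+y)) * Real.exp ((p-2)*d) := by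
    rw [← Real.exp_add, ← Real.exp_add]; rw [hd]; ring_nf
  have e2 : Real.exp ((p-1)*x + y) * Real.exp (x + (p-1)*y)
      = Real.exp (p*(x+y)) := by
    rw [← Real.exp_add]; ring_nf
  have e3 : Real.exp (x + (p-1)*y) * Real.exp (x + (p-1)*y)
      = Real.exp (p*(x+y)) * Real.exp (-((p-2)*d)) := by
    rw [← Real.exp_add, ← Real.exp_add]; rw [hd]; ring_nf
  have e4 : Real.exp (2*x) * Real.exp ((2*p-2)*x)
      = Real.exp (p*(x+y)) * Real.exp (p*d) := by
    rw [← Real.exp_add, ← Real.exp_add]; rw [hd]; ring_nf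
  have e5 : Real.exp (2*x) * Real.exp ((2*p-2)*y)
      = Real.exp (p*(x+y)) * Real.exp (-((p-2)*d)) := by
    rw [← Real.exp_add, ← Real.exp_add]; rw [hd]; ring_nf
  have e6 : Real.exp (2*y) * Real.exp ((2*p-2)*x)
      = Real.exp (p*(x+y)) * Real.exp ((p-2)*d) := by
    rw [← Real.exp_add, ← Real.exp_add]; rw [hd]; ring_nf
  have e7 : Real.exp (2*y) * Real.exp ((2*p-2)*y)
      = Real.exp (p*(x+y)) * Real.exp (-(p*d)) := by
    rw [← Real.exp_add, ← Real.exp_add]; rw [hd]; ring_nf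
  have h3 := mul_le_mul_of_nonneg_left h2 hE.le
  nlinarith [h3, e1, e2, e3, e4, e5, e6, e7]


noncomputable def Fp (p : ℝ) (z : ℂ) : ℂ :=
  if z = 0 then 0 else z * ((‖z‖ ^ (p - 2) : ℝ) : ℂ)

lemma Fp_eq (p : ℝ) (z : ℂ) : Fp p z = z * ((‖z‖ ^ (p - 2) : ℝ) : ℂ) := by
  unfold Fp
  split_ifs with h
  · simp [h]
  · rfl

lemma Fp_unit_mul (p : ℝ) (l z : ℂ) (hl : ‖l‖ = 1) :
    Fp p (l * z) = l * Fp p z := by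
  rw [Fp_eq, Fp_eq, norm_mul, hl, one_mul]
  ring

lemma hre_him (p : ℝ) (z w : ℂ) :
    ((z - w) * (starRingEnd ℂ) (Fp p z - Fp p w)).re
      = (‖z‖ ^ (p-2)) * (z.re^2 + z.im^2) + (‖w‖ ^ (p-2)) * (w.re^2 + w.im^2)
        - ((‖z‖ ^ (p-2)) + (‖w‖ ^ (p-2))) * (z.re*w.re + z.im*w.im)
    ∧ ((z - w) * (starRingEnd ℂ) (Fp p z - Fp p w)).im
      = ((‖z‖ ^ (p-2)) - (‖w‖ ^ (p-2))) * (z.im*w.re - z.re*w.im) := by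
  rw [Fp_eq, Fp_eq]
  constructor <;>
    simp [Complex.mul_re, Complex.mul_im, Complex.sub_re, Complex.sub_im] <;> ring

lemma CSineq (a b u v : ℝ) : (a*u + b*v)^2 ≤ (a^2+b^2)*(u^2+v^2) := by
  nlinarith [sq_nonneg (a*v - b*u)]

lemma final_ineq (L M C : ℝ) (h : (L+M)^2 ≤ C^2) (hC : 0 ≤ C) : L + M ≤ C := by
  nlinarith

lemma step_ineq (p A B r s : ℝ)
    (h4 : 4*(p-1)*(A*(r*s)-B*(r*s))^2 ≤ (p-2)^2*((r^2-s^2)*((A*r)^2-(B*s)^2))) :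
    (4*(p-1)*(A-B)^2 + (p-2)^2*(A+B)^2)*((r*s)^2) ≤ (p-2)^2*(A*r^2+B*s^2)^2 := by
  nlinarith [h4]

lemma key_real (p x y : ℝ) (hp : 1 < p) (X Y : ℝ)
    (hXY : X^2 + Y^2 = (Real.exp x * Real.exp y)^2) :
    0 ≤ Real.exp ((p-2)*x) * (Real.exp x)^2 + Real.exp ((p-2)*y) * (Real.exp y)^2
        - (Real.exp ((p-2)*x) + Real.exp ((p-2)*y)) * X ∧
    2 * Real.sqrt (p-1) * (|Real.exp ((p-2)*x) - Real.exp ((p-2)*y)| * |Y|)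
      ≤ |p - 2| * (Real.exp ((p-2)*x) * (Real.exp x)^2 + Real.exp ((p-2)*y) * (Real.exp y)^2
        - (Real.exp ((p-2)*x) + Real.exp ((p-2)*y)) * X) := by
  set A := Real.exp ((p-2)*x) with hAdef
  set B := Real.exp ((p-2)*y) with hBdef
  set r := Real.exp x with hrdef
  set s := Real.exp y with hsdef
  have hr0' : 0 < r := Real.exp_pos x
  have hs0' : 0 < s := Real.exp_pos y
  have hA0 : 0 < A := Real.exp_pos _
  have hB0 : 0 < B := Real.exp_pos _
  have hXle : X ≤ r*s := by nlinarith [sq_nonneg Y, mul_pos hr0' hs0']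
  have hmono : 0 ≤ (r - s) * (A*r - B*s) := by
    rcases le_total x y with h | h
    · have h1 : r ≤ s := Real.exp_le_exp.mpr h
      have h2 : A*r ≤ B*s := by
        rw [hAdef, hBdef, hrdef, hsdef, ← Real.exp_add, ← Real.exp_add]
        exact Real.exp_le_exp.mpr (by nlinarith)
      nlinarith
    · have h1 : s ≤ r := Real.exp_le_exp.mpr h
      have h2 : B*s ≤ A*r := by
        rw [hAdef, hBdef, hrdef, hsdef, ← Real.exp_add, ← Real.exp_add]
        exact Real.exp_le_exp.mpr (by nlinarith)
      nlinarith
  have hre' : 0 ≤ A*r^2 + B*s^2 - (A+B)*X := by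
    nlinarith [mul_le_mul_of_nonneg_left hXle (by positivity : (0:ℝ) ≤ A + B)]
  refine ⟨by linarith, ?_⟩
  have h4 := L4 p x y hp
  have f1 : Real.exp ((p-1)*x + y) = A*(r*s) := by
    rw [hAdef, hrdef, hsdef]
    simp only [← Real.exp_add]
    congr 1; ring
  have f2 : Real.exp (x + (p-1)*y) = B*(r*s) := by
    rw [hBdef, hrdef, hsdef]
    simp only [← Real.exp_add]
    congr 1; ring
  have f3 : Real.exp (2*x) = r^2 := by
    rw [hrdef, pow_two]
    simp only [← Real.exp_add]
    congr 1; ring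
  have f4 : Real.exp (2*y) = s^2 := by
    rw [hsdef, pow_two]
    simp only [← Real.exp_add]
    congr 1; ring
  have f5 : Real.exp ((2*p-2)*x) = (A*r)^2 := by
    rw [hAdef, hrdef, pow_two]
    simp only [← Real.exp_add]
    congr 1; ring
  have f6 : Real.exp ((2*p-2)*y) = (B*s)^2 := by
    rw [hBdef, hsdef, pow_two]
    simp only [← Real.exp_add]
    congr 1; ring
  rw [f1, f2, f3, f4, f5, f6] at h4
  clear_value A B r s
  set q := Real.sqrt (p-1) with hqdef
  have hq : q^2 = p-1 := Real.sq_sqrt (by linarith)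
  have hq0 : 0 ≤ q := Real.sqrt_nonneg _
  set U := |A - B| with hUdef
  set V := |Y| with hVdef
  set W := |p - 2| with hWdef
  have hP : W^2 = (p-2)^2 := sq_abs _
  have hABs : U^2 = (A-B)^2 := sq_abs _
  have hYs : V^2 = Y^2 := sq_abs _
  have hY0 : 0 ≤ V := abs_nonneg _
  have hAB0 : 0 ≤ U := abs_nonneg _
  have hP0 : 0 ≤ W := abs_nonneg _
  clear_value q U V W
  have hCS := CSineq (2*q*U) (W*(A+B)) V X
  have hYX : V^2 + X^2 = (r*s)^2 := by rw [hYs]; linarith [hXY]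
  have hmid : ((2*q*U)^2 + (W*(A+B))^2) * (V^2 + X^2)
      = (4*(p-1)*(A-B)^2 + (p-2)^2*(A+B)^2) * ((r*s)^2) := by
    rw [hYX, mul_pow, mul_pow, mul_pow, hABs, hP, hq]; ring
  have hstep := step_ineq p A B r s h4
  have key2 : ((2*q*U)*V + (W*(A+B))*X)^2 ≤ (W*(A*r^2+B*s^2))^2 := by
    calc ((2*q*U)*V + (W*(A+B))*X)^2
        ≤ ((2*q*U)^2 + (W*(A+B))^2) * (V^2 + X^2) := hCS
      _ = (4*(p-1)*(A-B)^2 + (p-2)^2*(A+B)^2) * ((r*s)^2) := hmid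
      _ ≤ (p-2)^2*(A*r^2+B*s^2)^2 := hstep
      _ = (W*(A*r^2+B*s^2))^2 := by rw [mul_pow, hP]
  have hC0 : 0 ≤ W*(A*r^2+B*s^2) := mul_nonneg hP0 (by positivity)
  have hfin := final_ineq ((2*q*U)*V) ((W*(A+B))*X) (W*(A*r^2+B*s^2)) key2 hC0
  have hdist : W*(A*r^2+B*s^2-(A+B)*X) = W*(A*r^2+B*s^2) - (W*(A+B))*X := by ring
  rw [hdist]
  linarith [hfin]

lemma key (p : ℝ) (hp : 1 < p) (z w : ℂ) :
    0 ≤ ((z - w) * (starRingEnd ℂ) (Fp p z - Fp p w)).re ∧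
    2 * Real.sqrt (p-1) * |((z - w) * (starRingEnd ℂ) (Fp p z - Fp p w)).im|
      ≤ |p - 2| * ((z - w) * (starRingEnd ℂ) (Fp p z - Fp p w)).re := by
  obtain ⟨hre, him⟩ := hre_him p z w
  by_cases hz : z = 0
  · subst hz
    simp only [Complex.zero_re, Complex.zero_im] at hre him
    rw [hre, him]
    constructor
    · have : (0:ℝ) ≤ ‖w‖ ^ (p-2) * (w.re^2 + w.im^2) := by positivity
      nlinarith
    · have h1 : ((‖(0:ℂ)‖ ^ (p-2) : ℝ) - ‖w‖ ^ (p-2)) * (0*w.re - 0*w.im) = 0 := by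
        ring
      rw [h1, abs_zero]
      have : (0:ℝ) ≤ ‖w‖ ^ (p-2) * (w.re^2 + w.im^2) := by positivity
      have h2 : (0:ℝ) ≤ |p-2| := abs_nonneg _
      nlinarith
  by_cases hw : w = 0
  · subst hw
    simp only [Complex.zero_re, Complex.zero_im] at hre him
    rw [hre, him]
    constructor
    · have : (0:ℝ) ≤ ‖z‖ ^ (p-2) * (z.re^2 + z.im^2) := by positivity
      nlinarith
    · have h1 : ((‖z‖ ^ (p-2) : ℝ) - ‖(0:ℂ)‖ ^ (p-2)) * (z.im*0 - z.re*0) = 0 := by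
        ring
      rw [h1, abs_zero]
      have : (0:ℝ) ≤ ‖z‖ ^ (p-2) * (z.re^2 + z.im^2) := by positivity
      have h2 : (0:ℝ) ≤ |p-2| := abs_nonneg _
      nlinarith
  have hr0 : 0 < ‖z‖ := norm_pos_iff.mpr hz
  have hs0 : 0 < ‖w‖ := norm_pos_iff.mpr hw
  set x := Real.log (‖z‖) with hxdef
  set y := Real.log (‖w‖) with hydef
  have hrx : ‖z‖ = Real.exp x := (Real.exp_log hr0).symm
  have hsy : ‖w‖ = Real.exp y := (Real.exp_log hs0).symm
  have hA : (‖z‖ ^ (p-2) : ℝ) = Real.exp ((p-2)*x) := by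
    rw [Real.rpow_def_of_pos hr0, mul_comm]
  have hB : (‖w‖ ^ (p-2) : ℝ) = Real.exp ((p-2)*y) := by
    rw [Real.rpow_def_of_pos hs0, mul_comm]
  have hz2 : z.re^2 + z.im^2 = (Real.exp x)^2 := by
    rw [← hrx, Complex.sq_norm, Complex.normSq_apply]; ring
  have hw2 : w.re^2 + w.im^2 = (Real.exp y)^2 := by
    rw [← hsy, Complex.sq_norm, Complex.normSq_apply]; ring
  have hXY : (z.re*w.re + z.im*w.im)^2 + (z.im*w.re - z.re*w.im)^2
      = (Real.exp x * Real.exp y)^2 := by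
    have h1 : (z.re*w.re + z.im*w.im)^2 + (z.im*w.re - z.re*w.im)^2
        = (z.re^2 + z.im^2) * (w.re^2 + w.im^2) := by ring
    rw [h1, hz2, hw2]; ring
  obtain ⟨k1, k2⟩ := key_real p x y hp (z.re*w.re + z.im*w.im) (z.im*w.re - z.re*w.im) hXY
  rw [hre, him, hA, hB, hz2, hw2, abs_mul]
  exact ⟨k1, k2⟩
def Sector (φ : ℝ) : Set ℂ := {z : ℂ | z = 0 ∨ |z.arg| ≤ φ}

theorem symmetrized_sum_in_sector (n : ℕ) (p : ℝ) (hp : 1 < p)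
    (a lam : Fin n → Fin n → ℂ) (c : Fin n → ℂ)
    (hherm : ∀ j k, a j k = (starRingEnd ℂ) (a k j))
    (hlam_abs : ∀ k j, ‖(lam k j)‖ = 1)
    (hlam : ∀ k j, a k j = lam k j * ((‖(a k j)‖ : ℝ) : ℂ)) :
    (∑ j, ∑ k, (c j * (starRingEnd ℂ) (Fp p (c j)) * ((‖(a k j)‖ : ℝ) : ℂ)
        - c j * (starRingEnd ℂ) (Fp p (c k)) * a k j)
      = (1 / 2 : ℂ) * ∑ j, ∑ k, ((‖(a k j)‖ : ℝ) : ℂ)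
          * (lam k j * c j - c k)
          * (starRingEnd ℂ) (Fp p (lam k j * c j) - Fp p (c k))) ∧
    (∑ j, ∑ k, (c j * (starRingEnd ℂ) (Fp p (c j)) * ((‖(a k j)‖ : ℝ) : ℂ)
        - c j * (starRingEnd ℂ) (Fp p (c k)) * a k j)) ∈
      Sector (Real.arcsin |1 - 2 / p|) := by
  have habs_symm : ∀ j k : Fin n, (‖(a j k)‖ : ℝ) = ‖(a k j)‖ := by
    intro j k
    rw [hherm j k]
    exact Complex.norm_conj _
  set F : Fin n → ℂ := fun j => (starRingEnd ℂ) (Fp p (c j)) with hF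
  set u : Fin n → Fin n → ℂ :=
    fun j k => ((‖(a k j)‖ : ℝ) : ℂ) * (c j * F j) with hu
  set v : Fin n → Fin n → ℂ := fun j k => a k j * (c j * F k) with hv
  -- pointwise identity
  have hpoint : ∀ j k : Fin n,
      ((‖(a k j)‖ : ℝ) : ℂ) * (lam k j * c j - c k)
        * (starRingEnd ℂ) (Fp p (lam k j * c j) - Fp p (c k))
      = u j k + u k j - (v j k + v k j) := by
    intro j k
    rw [Fp_unit_mul p (lam k j) (c j) (hlam_abs k j), map_sub, map_mul]
    have h1 : a k j = lam k j * ((‖(a k j)‖ : ℝ) : ℂ) := hlam k j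
    have h2 : (starRingEnd ℂ) (lam k j) * lam k j = 1 := by
      rw [mul_comm, Complex.mul_conj, Complex.normSq_eq_norm_sq, hlam_abs k j]
      norm_num
    have h3' := congrArg (starRingEnd ℂ) (hlam k j)
    rw [map_mul, Complex.conj_ofReal] at h3'
    have h3 : a j k = (starRingEnd ℂ) (lam k j) * ((‖(a k j)‖ : ℝ) : ℂ) :=
      (hherm j k).trans h3' 
    simp only [hu, hv, hF]
    have hs : ((‖(a j k)‖ : ℝ) : ℂ) = ((‖(a k j)‖ : ℝ) : ℂ) := by
      rw [habs_symm j k]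
    rw [hs]
    linear_combination (((‖(a k j)‖ : ℝ) : ℂ) * c j * (starRingEnd ℂ) (Fp p (c j))) * h2
      + (c j * (starRingEnd ℂ) (Fp p (c k))) * h1
      + (c k * (starRingEnd ℂ) (Fp p (c j))) * h3
  -- sum manipulation
  have hswap : ∀ g : Fin n → Fin n → ℂ, ∑ j, ∑ k, g k j = ∑ j, ∑ k, g j k := by
    intro g
    exact Finset.sum_comm
  have hT : (∑ j, ∑ k, ((‖(a k j)‖ : ℝ) : ℂ) * (lam k j * c j - c k)
        * (starRingEnd ℂ) (Fp p (lam k j * c j) - Fp p (c k)))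
      = 2 * ((∑ j, ∑ k, u j k) - ∑ j, ∑ k, v j k) := by
    rw [Finset.sum_congr rfl (fun j _ => Finset.sum_congr rfl (fun k _ => hpoint j k))]
    simp only [Finset.sum_sub_distrib, Finset.sum_add_distrib]
    rw [hswap (fun j k => u j k), hswap (fun j k => v j k)]
    ring
  have hS : (∑ j, ∑ k, (c j * (starRingEnd ℂ) (Fp p (c j)) * ((‖(a k j)‖ : ℝ) : ℂ)
        - c j * (starRingEnd ℂ) (Fp p (c k)) * a k j))
      = (∑ j, ∑ k, u j k) - ∑ j, ∑ k, v j k := by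
    rw [← Finset.sum_sub_distrib]
    refine Finset.sum_congr rfl (fun j _ => ?_)
    rw [← Finset.sum_sub_distrib]
    refine Finset.sum_congr rfl (fun k _ => ?_)
    simp only [hu, hv, hF]
    ring
  have hid : (∑ j, ∑ k, (c j * (starRingEnd ℂ) (Fp p (c j)) * ((‖(a k j)‖ : ℝ) : ℂ)
        - c j * (starRingEnd ℂ) (Fp p (c k)) * a k j))
      = (1 / 2 : ℂ) * ∑ j, ∑ k, ((‖(a k j)‖ : ℝ) : ℂ) * (lam k j * c j - c k)
          * (starRingEnd ℂ) (Fp p (lam k j * c j) - Fp p (c k)) := by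
    rw [hT, hS]; ring
  refine ⟨hid, ?_⟩
  rw [hid]
  -- sector membership
  set q := Real.sqrt (p - 1) with hq
  have hq2 : q ^ 2 = p - 1 := Real.sq_sqrt (by linarith)
  have hq0 : 0 < q := Real.sqrt_pos.mpr (by linarith)
  set P : ℂ → Prop := fun ζ => 0 ≤ ζ.re ∧ 2 * q * |ζ.im| ≤ |p - 2| * ζ.re with hPdef
  have hP0 : P 0 := by constructor <;> simp
  have hPadd : ∀ ζ η, P ζ → P η → P (ζ + η) := by
    intro ζ η ⟨h1, h2⟩ ⟨h3, h4⟩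
    constructor
    · simp only [Complex.add_re]; linarith
    · simp only [Complex.add_re, Complex.add_im]
      have := abs_add_le ζ.im η.im
      have h5 : 2 * q * |ζ.im + η.im| ≤ 2 * q * (|ζ.im| + |η.im|) := by
        apply mul_le_mul_of_nonneg_left this (by positivity)
      nlinarith
  have hPterm : ∀ j k : Fin n, P (((‖(a k j)‖ : ℝ) : ℂ) * (lam k j * c j - c k)
      * (starRingEnd ℂ) (Fp p (lam k j * c j) - Fp p (c k))) := by
    intro j k
    obtain ⟨k1, k2⟩ := key p hp (lam k j * c j) (c k)
    set ζ := (lam k j * c j - c k) * (starRingEnd ℂ) (Fp p (lam k j * c j) - Fp p (c k)) with hζ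
    set t : ℝ := ‖(a k j)‖ with ht
    have ht0 : 0 ≤ t := norm_nonneg _
    have hmul : ((t : ℂ) * ζ).re = t * ζ.re ∧ ((t : ℂ) * ζ).im = t * ζ.im := by
      constructor <;> simp [Complex.mul_re, Complex.mul_im]
    have hassoc : ((t : ℂ)) * (lam k j * c j - c k)
        * (starRingEnd ℂ) (Fp p (lam k j * c j) - Fp p (c k)) = (t : ℂ) * ζ := by
      rw [hζ]; ring
    rw [hassoc]
    constructor
    · rw [hmul.1]; exact mul_nonneg ht0 k1
    · rw [hmul.1, hmul.2, abs_mul, _root_.abs_of_nonneg ht0]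
      calc 2 * q * (t * |ζ.im|) = t * (2 * q * |ζ.im|) := by ring
        _ ≤ t * (|p - 2| * ζ.re) := mul_le_mul_of_nonneg_left k2 ht0
        _ = |p - 2| * (t * ζ.re) := by ring
  have hPsum : P (∑ j, ∑ k, ((‖(a k j)‖ : ℝ) : ℂ) * (lam k j * c j - c k)
      * (starRingEnd ℂ) (Fp p (lam k j * c j) - Fp p (c k))) := by
    apply Finset.sum_induction _ P hPadd hP0
    intro j _
    apply Finset.sum_induction _ P hPadd hP0
    intro k _
    exact hPterm j k
  set T := ∑ j, ∑ k, ((‖(a k j)‖ : ℝ) : ℂ) * (lam k j * c j - c k)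
      * (starRingEnd ℂ) (Fp p (lam k j * c j) - Fp p (c k)) with hTdef
  obtain ⟨hre, him⟩ := hPsum
  have hS2 : P ((1/2 : ℂ) * T) := by
    have h1 : ((1/2 : ℂ) * T).re = T.re / 2 := by
      simp [Complex.mul_re]; ring
    have h2 : ((1/2 : ℂ) * T).im = T.im / 2 := by
      simp [Complex.mul_im]; ring
    constructor
    · rw [h1]; linarith
    · rw [h1, h2, abs_div]
      rw [abs_of_pos (by norm_num : (0:ℝ) < 2)]
      linarith
  obtain ⟨hre2, him2⟩ := hS2
  set Z := (1/2 : ℂ) * T with hZ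
  by_cases hZ0 : Z = 0
  · exact Or.inl hZ0
  right
  have hp0 : 0 < p := by linarith
  have hrepos : 0 < Z.re := by
    rcases hre2.lt_or_eq with h | h
    · exact h
    · exfalso
      apply hZ0
      have h' : Z.re = 0 := h.symm
      have him0 : Z.im = 0 := by
        have h5 : 2 * q * |Z.im| ≤ 0 := by
          rw [h', mul_zero] at him2
          exact him2
        have h6 := abs_nonneg Z.im
        have h7 : |Z.im| = 0 := by nlinarith
        exact abs_eq_zero.mp h7
      exact Complex.ext (by simp [h']) (by simp [him0])
  have habsZ : 0 < ‖Z‖ := norm_pos_iff.mpr hZ0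
  have harg1 : |Z.arg| ≤ Real.pi / 2 := Complex.abs_arg_le_pi_div_two_iff.mpr hre2
  have hargeq : Z.arg = Real.arcsin (Z.im / ‖Z‖) := by
    obtain ⟨ha1, ha2⟩ := abs_le.mp harg1
    have h := Real.arcsin_sin ha1 ha2
    rw [Complex.sin_arg] at h
    exact h.symm
  have habs2 : (‖Z‖)^2 = Z.re^2 + Z.im^2 := by
    rw [Complex.sq_norm, Complex.normSq_apply]; ring
  have heq : |1 - 2/p| = |p - 2| / p := by
    rw [show (1 : ℝ) - 2/p = (p-2)/p by field_simp, abs_div, _root_.abs_of_pos hp0]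
  have hsq : (|Z.im| * p)^2 ≤ (|p - 2| * ‖Z‖)^2 := by
    have hss := mul_self_le_mul_self (by positivity : (0:ℝ) ≤ 2*q*|Z.im|) him2
    nlinarith [hss, hq2, _root_.sq_abs Z.im, _root_.sq_abs (p-2), habs2,
      abs_nonneg Z.im, abs_nonneg (p-2), hre2]
  have hlin : |Z.im| * p ≤ |p - 2| * ‖Z‖ := by
    have hb : (0:ℝ) ≤ |p - 2| * ‖Z‖ := by positivity
    exact le_of_pow_le_pow_left₀ two_ne_zero hb hsq
  have hbound : |Z.im / ‖Z‖| ≤ |1 - 2/p| := by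
    rw [heq, abs_div, _root_.abs_of_pos habsZ, div_le_div_iff₀ habsZ hp0]
    linarith [hlin]
  rw [hargeq]
  have habs_arcsin : |Real.arcsin (Z.im / ‖Z‖)|
      = Real.arcsin |Z.im / ‖Z‖| := by
    rcases abs_cases (Z.im / ‖Z‖) with ⟨h, h'⟩ | ⟨h, h'⟩
    · rw [h, _root_.abs_of_nonneg (Real.arcsin_nonneg.mpr h')]
    · rw [h, Real.arcsin_neg, _root_.abs_of_nonpos (Real.arcsin_nonpos.mpr h'.le)]
  rw [habs_arcsin]
  exact Real.monotone_arcsin hbound
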